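/- The set of N-tuples (v_1, ..., v_N) of vectors in ℝ^n forming a d-decisive set is open and dense in (ℝ^n)^N, where N = C(n+d-1, d). -/

import Mathlib

set_option maxHeartbeats 1000000

open MvPolynomial


/-- A tuple `v : Fin N → ℝ^n` with `N = C(n+d-1,d)` is `d`-decisive if the only
homogeneous polynomial of degree `d` vanishing at all the `v i` is the zero polynomial
(equivalently, the evaluation map on degree-`d` homogeneous polynomials is injective). -/
def IsDecisive (n d : ℕ) (v : Fin ((n + d - 1).choose d) → (Fin n → ℝ)) : Prop :=
  ∀ P ∈ MvPolynomial.homogeneousSubmodule (Fin n) ℝ d,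
    (∀ i, MvPolynomial.eval (v i) P = 0) → P = 0

namespace DecisiveAux
variable (n d : ℕ)
abbrev Idx : Type := {s : Fin n →₀ ℕ // s.degree = d}
noncomputable def symEquiv : Sym (Fin n) d ≃ Idx n d :=
  (Sym.equivNatSum (Fin n) d).trans (Equiv.subtypeEquivRight (fun s => by
    simp [Finsupp.degree, Finsupp.sum]; rfl))
noncomputable instance : Fintype (Idx n d) := Fintype.ofEquiv _ (symEquiv n d)
lemma card_idx : Fintype.card (Idx n d) = (n + d - 1).choose d := by
  rw [← Fintype.card_congr (symEquiv n d), Sym.card_sym_eq_choose, Fintype.card_fin]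
noncomputable def e : Idx n d ≃ Fin ((n + d - 1).choose d) :=
  Fintype.equivFinOfCardEq (card_idx n d)
noncomputable def Phi (c : Idx n d → ℝ) : MvPolynomial (Fin n) ℝ :=
  ∑ s : Idx n d, monomial s.val (c s)
lemma Phi_isHomogeneous (c : Idx n d → ℝ) : (Phi n d c).IsHomogeneous d := by
  rw [← mem_homogeneousSubmodule]
  exact Submodule.sum_mem _ fun s _ => (mem_homogeneousSubmodule _ _).2
    (isHomogeneous_monomial _ s.2)
lemma coeff_Phi (c : Idx n d → ℝ) (s : Idx n d) : coeff s.val (Phi n d c) = c s := by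
  rw [Phi, coeff_sum]
  rw [Finset.sum_eq_single s]
  · simp [coeff_monomial]
  · intro t _ hts
    rw [coeff_monomial, if_neg]
    exact fun h => hts (Subtype.ext h)
  · simp
lemma eval_Phi (c : Idx n d → ℝ) (x : Fin n → ℝ) :
    eval x (Phi n d c) = ∑ s : Idx n d, c s * ∏ k, x k ^ s.val k := by
  rw [Phi, map_sum]
  refine Finset.sum_congr rfl fun s _ => ?_
  rw [eval_monomial, Finsupp.prod_fintype]
  intro i; exact pow_zero _
lemma Phi_coeff_eq (P : MvPolynomial (Fin n) ℝ) (hP : P.IsHomogeneous d) :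
    Phi n d (fun s => coeff s.val P) = P := by
  have hinj : Set.InjOn Subtype.val ((Finset.univ : Finset (Idx n d)) : Set (Idx n d)) :=
    fun a _ b _ h => Subtype.ext h
  rw [Phi, ← Finset.sum_image (f := fun m => monomial m (coeff m P)) hinj]
  conv_rhs => rw [P.as_sum]
  symm
  apply Finset.sum_subset
  · intro m hm
    rcases eq_or_ne (Finsupp.degree m) d with h | h
    · exact Finset.mem_image.2 ⟨⟨m, h⟩, Finset.mem_univ _, rfl⟩
    · exact absurd (hP.coeff_eq_zero h) (mem_support_iff.1 (by simpa using hm))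
  · intro m _ hm
    have : coeff m P = 0 := by
      by_contra h
      exact hm (mem_support_iff.2 h)
    simp [this]

noncomputable def A (v : Fin ((n + d - 1).choose d) → (Fin n → ℝ)) :
    Matrix (Fin ((n + d - 1).choose d)) (Fin ((n + d - 1).choose d)) ℝ :=
  Matrix.of fun i j => ∏ k, v i k ^ ((e n d).symm j).val k

lemma eval_Phi_eq_mulVec (v : Fin ((n + d - 1).choose d) → (Fin n → ℝ))
    (c : Fin ((n + d - 1).choose d) → ℝ) (i : Fin ((n + d - 1).choose d)) :
    eval (v i) (Phi n d (c ∘ e n d)) = (A n d v).mulVec c i := by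
  rw [eval_Phi, Matrix.mulVec, dotProduct]
  rw [← Equiv.sum_comp (e n d) (fun j => A n d v i j * c j)]
  refine Finset.sum_congr rfl fun s _ => ?_
  simp [A, mul_comm]

lemma isDecisive_iff_det_ne (v : Fin ((n + d - 1).choose d) → (Fin n → ℝ)) :
    IsDecisive n d v ↔ (A n d v).det ≠ 0 := by
  constructor
  · intro hdec hdet
    obtain ⟨c, hc0, hmc⟩ := Matrix.exists_mulVec_eq_zero_iff.2 hdet
    have hP := hdec (Phi n d (c ∘ e n d))
      ((mem_homogeneousSubmodule _ _).2 (Phi_isHomogeneous n d _))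
      (fun i => by rw [eval_Phi_eq_mulVec, hmc]; rfl)
    apply hc0
    funext j
    have h2 := coeff_Phi n d (c ∘ e n d) ((e n d).symm j)
    rw [hP] at h2
    simpa using h2.symm
  · intro hdet P hPmem hPeval
    set c : Idx n d → ℝ := fun s => coeff s.val P with hc
    have hPc : Phi n d c = P := Phi_coeff_eq n d P ((mem_homogeneousSubmodule _ _).1 hPmem)
    have hcomp : (c ∘ (e n d).symm) ∘ (e n d) = c := by funext s; simp
    have hker : (A n d v).mulVec (c ∘ (e n d).symm) = 0 := by
      funext i
      rw [← eval_Phi_eq_mulVec, hcomp, hPc, hPeval i]; rfl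
    have hzero : c ∘ (e n d).symm = 0 := by
      by_contra hne
      exact hdet (Matrix.exists_mulVec_eq_zero_iff.1 ⟨_, hne, hker⟩)
    have hc0 : c = 0 := by
      funext s
      have := congrFun hzero (e n d s)
      simpa using this
    rw [← hPc, hc0]
    simp [Phi]

end DecisiveAux

namespace DecisiveAux
variable (n d : ℕ)

noncomputable def mvec (x : Fin n → ℝ) : Idx n d → ℝ := fun s => ∏ k, x k ^ s.val k

lemma span_mvec : Submodule.span ℝ (Set.range (mvec n d)) = ⊤ := by
  by_contra h
  obtain ⟨f, hf0, hmap⟩ := Submodule.exists_dual_map_eq_bot_of_lt_top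
    (lt_top_iff_ne_top.2 h) inferInstance
  set c : Idx n d → ℝ := fun s => f (fun t => if s = t then 1 else 0) with hcdef
  have hfy : ∀ y : Idx n d → ℝ, f y = ∑ s, y s * c s := by
    intro y
    conv_lhs => rw [pi_eq_sum_univ y]
    rw [map_sum]
    refine Finset.sum_congr rfl fun s _ => ?_
    rw [map_smul]
    simp [hcdef, smul_eq_mul]
  have hPc : Phi n d c = 0 := by
    apply MvPolynomial.funext
    intro x
    rw [eval_Phi, map_zero]
    have hmem : mvec n d x ∈ Submodule.span ℝ (Set.range (mvec n d)) :=
      Submodule.subset_span ⟨x, rfl⟩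
    have hfz : f (mvec n d x) = 0 := by
      have h2 : f (mvec n d x) ∈ (Submodule.span ℝ (Set.range (mvec n d))).map f :=
        Submodule.mem_map_of_mem hmem
      rw [hmap] at h2
      simpa using h2
    rw [hfy] at hfz
    rw [← hfz]
    exact Finset.sum_congr rfl fun s _ => mul_comm _ _
  apply hf0
  have hcz : ∀ s, c s = 0 := by
    intro s
    have h3 := coeff_Phi n d c s
    rw [hPc] at h3
    simpa using h3.symm
  refine LinearMap.ext fun y => ?_
  rw [hfy]
  simp [hcz]

lemma exists_det_ne : ∃ v, (A n d v).det ≠ 0 := by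
  obtain ⟨b, hbsub, hbspan, hbind⟩ := exists_linearIndependent ℝ (Set.range (mvec n d))
  rw [span_mvec] at hbspan
  let bas : Module.Basis b ℝ (Idx n d → ℝ) := Module.Basis.mk hbind (by rw [Subtype.range_coe, hbspan])
  haveI : Fintype b := FiniteDimensional.fintypeBasisIndex bas
  have hcard : Fintype.card b = (n + d - 1).choose d := by
    rw [← Module.finrank_eq_card_basis bas, Module.finrank_fintype_fun_eq_card, card_idx]
  let eb : Idx n d ≃ b := (e n d).trans (Fintype.equivFinOfCardEq hcard).symm
  have hchoose : ∀ s, ∃ x, mvec n d x = (eb s : Idx n d → ℝ) := fun s => hbsub (eb s).2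
  choose pts hpts using hchoose
  refine ⟨pts ∘ (e n d).symm, ?_⟩
  set M : Matrix (Idx n d) (Idx n d) ℝ := Matrix.of fun s t => mvec n d (pts s) t with hM
  have hAM : A n d (pts ∘ (e n d).symm) = (Matrix.reindex (e n d) (e n d)) M := by
    ext i j
    simp only [Matrix.reindex_apply, Matrix.submatrix_apply, hM, Matrix.of_apply]
    rfl
  have hrows : (fun s => M s) = ((fun x : b => (x : Idx n d → ℝ)) ∘ ⇑eb) := by
    funext s
    show M s = ((eb s : Idx n d → ℝ))
    rw [← hpts s]
    rfl
  have hind : LinearIndependent ℝ (fun s => M s) := by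
    rw [hrows]
    exact hbind.comp ⇑eb eb.injective
  have hunit : IsUnit M := Matrix.linearIndependent_rows_iff_isUnit.1 hind
  have hdet : M.det ≠ 0 := isUnit_iff_ne_zero.1 ((Matrix.isUnit_iff_isUnit_det _).1 hunit)
  rw [hAM, Matrix.det_reindex_self]
  exact hdet
end DecisiveAux

namespace DecisiveAux
variable (n d : ℕ)

lemma continuous_detA :
    Continuous fun v : Fin ((n + d - 1).choose d) → (Fin n → ℝ) => (A n d v).det := by
  apply Continuous.matrix_det
  apply continuous_matrix
  intro i j
  show Continuous fun v : Fin ((n + d - 1).choose d) → Fin n → ℝ =>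
    ∏ k, v i k ^ ((e n d).symm j).val k
  apply continuous_finset_prod
  intro k _
  exact ((continuous_apply k).comp (continuous_apply i)).pow _

end DecisiveAux


/-- The set of `d`-decisive tuples of vectors in `ℝ^n` is open and dense in `(ℝ^n)^N`,
where `N = C(n+d-1,d)`. -/
theorem decisive_tuples_open_dense (n d : ℕ) (hn : 1 ≤ n) :
    IsOpen {v : Fin ((n + d - 1).choose d) → (Fin n → ℝ) | IsDecisive n d v} ∧
    Dense {v : Fin ((n + d - 1).choose d) → (Fin n → ℝ) | IsDecisive n d v} := by
  have hset : {v : Fin ((n + d - 1).choose d) → (Fin n → ℝ) | IsDecisive n d v}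
      = (fun v => (DecisiveAux.A n d v).det) ⁻¹' ({0}ᶜ) := by
    ext v
    simp [DecisiveAux.isDecisive_iff_det_ne, Set.mem_preimage]
  constructor
  · rw [hset]
    exact isOpen_compl_singleton.preimage (DecisiveAux.continuous_detA n d)
  · obtain ⟨w, hw⟩ := DecisiveAux.exists_det_ne n d
    intro u
    set g : ℝ → (Fin ((n + d - 1).choose d) → Fin n → ℝ) :=
      fun t i k => u i k + t * (w i k - u i k) with hg
    have hgc : Continuous g := by
      apply continuous_pi; intro i; apply continuous_pi; intro k
      exact continuous_const.add (continuous_id.mul continuous_const)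
    set B : Matrix (Fin ((n + d - 1).choose d)) (Fin ((n + d - 1).choose d)) (Polynomial ℝ) :=
      Matrix.of fun i j =>
        ∏ k, (Polynomial.C (u i k) + Polynomial.X * Polynomial.C (w i k - u i k)) ^
          ((DecisiveAux.e n d).symm j).val k with hB
    have hev : ∀ t, Polynomial.eval t B.det = (DecisiveAux.A n d (g t)).det := by
      intro t
      have hBA : B.map (Polynomial.evalRingHom t) = DecisiveAux.A n d (g t) := by
        ext i j
        simp [hB, DecisiveAux.A, hg, Matrix.map_apply, Polynomial.eval_prod]
      rw [show Polynomial.eval t B.det = (Polynomial.evalRingHom t) B.det from rfl,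
        RingHom.map_det, RingHom.mapMatrix_apply, hBA]
    have hg1 : g 1 = w := by funext i k; simp [hg]
    have hp : B.det ≠ 0 := by
      intro h
      apply hw
      have := hev 1
      rw [h, Polynomial.eval_zero, hg1] at this
      exact this.symm
    have hdense : Dense ({t : ℝ | Polynomial.IsRoot B.det t}ᶜ) :=
      (Polynomial.finite_setOf_isRoot hp).countable.dense_compl ℝ
    have hsub : g '' ({t : ℝ | Polynomial.IsRoot B.det t}ᶜ) ⊆
        {v : Fin ((n + d - 1).choose d) → (Fin n → ℝ) | IsDecisive n d v} := by
      rintro - ⟨t, ht, rfl⟩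
      have : (DecisiveAux.A n d (g t)).det ≠ 0 := by
        rw [← hev t]
        exact ht
      exact (DecisiveAux.isDecisive_iff_det_ne n d _).2 this
    have hg0 : g 0 = u := by funext i k; simp [hg]
    have h0 : (0 : ℝ) ∈ closure ({t : ℝ | Polynomial.IsRoot B.det t}ᶜ) := hdense 0
    have h1 : g 0 ∈ closure (g '' ({t : ℝ | Polynomial.IsRoot B.det t}ᶜ)) :=
      image_closure_subset_closure_image hgc ⟨0, h0, rfl⟩
    rw [hg0] at h1
    exact closure_mono hsub h1
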